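/- Local nonlinear stability of the disease-free steady state (Theorem 1). Let λ, γ > 0 and V̄ = λ/γ. Let τ : (0,∞) → [0,∞), let φ : (0,∞) → (0,∞) be differentiable, let Λ̄ > 0 (the adjoint eigenvalue at V̄, positive because Λ(·) is decreasing and V̄ < V∞), and let K₁, K₂ > 0 be constants with |τ(x)·φ'(x)| ≤ K₁·φ(x) and τ(x) ≤ K₂·φ(x) for all x > 0. Let V : [0,∞) → ℝ be differentiable and u : (0,∞)×[0,∞) → [0,∞) be such that for all t ≥ 0: the functions u(·,t)φ, τ(·)u(·,t) and |φ'(·)|τ(·)u(·,t) are integrable on (0,∞); V'(t) = λ − γV(t) − V(t)·∫₀^∞ τ(x)u(x,t)dx; and the weak form of the polymer equation tested against φ holds, i.e. t ↦ M(t) := ∫₀^∞ u(x,t)φ(x)dx is differentiable with M'(t) = −Λ̄·M(t) + (V(t) − V̄)·∫₀^∞ τ(x)φ'(x)u(x,t)dx. Then the zero steady state (V̄, 0) is locally nonlinearly stable: there exist ε > 0, C > 0 and r > 0, depending only on λ, γ, Λ̄, K₁, K₂, such that if M(0) + |V(0) − V̄| ≤ ε, then M(t) + |V(t) − V̄| ≤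 C·e^{−r·t} for all t ≥ 0. -/

import Mathlib

set_option maxHeartbeats 1000000
open MeasureTheory Set Filter Topology

/-- Exponential decay for a nonnegative "energy" satisfying a conditional
differential inequality `E' ≤ -r E` valid while `E ≤ δ²`, starting below `δ²/2`. -/
lemma ode_decay (r δ : ℝ) (E E' : ℝ → ℝ) (hr : 0 < r) (hδ : 0 < δ)
    (hE : ∀ t ≥ 0, HasDerivAt E (E' t) t)
    (hEnn : ∀ t ≥ 0, 0 ≤ E t)
    (hB : ∀ t ≥ 0, E t ≤ δ ^ 2 → E' t ≤ -r * E t)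
    (h0 : E 0 < δ ^ 2 / 2) :
    ∀ t ≥ 0, E t ≤ E 0 * Real.exp (-r * t) := by
  have hF : ∀ t ≥ 0, HasDerivAt (fun s => E s * Real.exp (r * s))
      ((E' t + r * E t) * Real.exp (r * t)) t := by
    intro t ht
    have h1 : HasDerivAt (fun s : ℝ => Real.exp (r * s)) (Real.exp (r * t) * (r * 1)) t :=
      ((hasDerivAt_id t).const_mul r).exp
    have h2 := (hE t ht).mul h1
    convert h2 using 1 <;> first | rfl | ring
  -- Step 1: the energy never reaches `δ²`.
  have key : ∀ t ≥ 0, E t < δ ^ 2 := by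
    by_contra hc
    push_neg at hc
    obtain ⟨T, hT0, hTE⟩ := hc
    have hδ2 : 0 < δ ^ 2 := by positivity
    set A : Set ℝ := {t | t ∈ Icc 0 T ∧ δ ^ 2 ≤ E t} with hA
    have hTA : T ∈ A := ⟨⟨hT0, le_rfl⟩, hTE⟩
    have hAne : A.Nonempty := ⟨T, hTA⟩
    have hAbdd : BddBelow A := ⟨0, fun x hx => hx.1.1⟩
    have hAclosed : IsClosed A := by
      have hcont : ContinuousOn E (Icc 0 T) := fun s hs =>
        ((hE s hs.1).continuousAt).continuousWithinAt
      have h := hcont.preimage_isClosed_of_isClosed isClosed_Icc (isClosed_Ici (a := δ ^ 2))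
      convert h using 1
      ext x; simp [A, and_comm]
    set T0 := sInf A with hT0def
    have hT0A : T0 ∈ A := hAclosed.csInf_mem hAne hAbdd
    have hT0nn : 0 ≤ T0 := hT0A.1.1
    have hET0 : δ ^ 2 ≤ E T0 := hT0A.2
    have hbefore : ∀ s, 0 ≤ s → s < T0 → E s < δ ^ 2 := by
      intro s hs0 hsT0
      by_contra h
      push_neg at h
      exact absurd (csInf_le hAbdd ⟨⟨hs0, hsT0.le.trans hT0A.1.2⟩, h⟩) (not_le.2 hsT0)
    have hanti : AntitoneOn (fun s => E s * Real.exp (r * s)) (Icc 0 T0) := by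
      apply antitoneOn_of_deriv_nonpos (convex_Icc 0 T0)
      · exact fun s hs => ((hF s hs.1).continuousAt).continuousWithinAt
      · intro s hs
        rw [interior_Icc] at hs
        exact ((hF s hs.1.le).differentiableAt).differentiableWithinAt
      · intro s hs
        rw [interior_Icc] at hs
        rw [(hF s hs.1.le).deriv]
        have h1 : E' s ≤ -r * E s := hB s hs.1.le (hbefore s hs.1.le hs.2).le
        have : E' s + r * E s ≤ 0 := by linarith
        exact mul_nonpos_of_nonpos_of_nonneg this (Real.exp_nonneg _)
    have hm := hanti ⟨le_rfl, hT0nn⟩ ⟨hT0nn, le_rfl⟩ hT0nn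
    simp only [mul_zero, Real.exp_zero, mul_one] at hm
    have hexp : 1 ≤ Real.exp (r * T0) := Real.one_le_exp (by positivity)
    have h2 : E T0 ≤ E T0 * Real.exp (r * T0) :=
      le_mul_of_one_le_right (hEnn T0 hT0nn) hexp
    linarith
  -- Step 2: global Gronwall.
  have hanti : AntitoneOn (fun s => E s * Real.exp (r * s)) (Ici 0) := by
    apply antitoneOn_of_deriv_nonpos (convex_Ici 0)
    · exact fun s hs => ((hF s hs).continuousAt).continuousWithinAt
    · intro s hs
      rw [interior_Ici] at hs
      exact ((hF s hs.le).differentiableAt).differentiableWithinAt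
    · intro s hs
      rw [interior_Ici] at hs
      rw [(hF s hs.le).deriv]
      have h1 : E' s ≤ -r * E s := hB s hs.le (key s hs.le).le
      have : E' s + r * E s ≤ 0 := by linarith
      exact mul_nonpos_of_nonpos_of_nonneg this (Real.exp_nonneg _)
  intro t ht
  have hm := hanti (self_mem_Ici) ht ht
  simp only [mul_zero, Real.exp_zero, mul_one] at hm
  have hp : 0 < Real.exp (r * t) := Real.exp_pos _
  rw [show -r * t = -(r * t) by ring, Real.exp_neg, ← div_eq_mul_inv, le_div_iff₀ hp]
  exact hm

/-- **Local nonlinear stability of the disease-free steady state** (Theorem 1 of the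
paper): with `V̄ = λ/γ` and adjoint eigenvalue `Λ̄ = Λ(V̄) > 0`, there exist
`ε, C, r > 0`, depending only on `λ, γ, Λ̄, K₁, K₂`, such that any solution `(V, u)` of
the prion system (in the weak, duality form tested against the positive adjoint
eigenfunction `φ` satisfying `|τ φ'| ≤ K₁ φ` and `τ ≤ K₂ φ`) with
`M(0) + |V(0) − V̄| ≤ ε` satisfies `M(t) + |V(t) − V̄| ≤ C e^{−r t}` for all `t ≥ 0`,
where `M(t) = ∫ u(x,t) φ(x) dx`. -/
theorem zero_state_local_stability
    (lam gam Lam K1 K2 : ℝ)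
    (hlam : 0 < lam) (hgam : 0 < gam) (hLam : 0 < Lam)
    (hK1 : 0 < K1) (hK2 : 0 < K2) :
    ∃ eps > 0, ∃ C > 0, ∃ r > 0,
      ∀ (tau phi phi' : ℝ → ℝ) (V : ℝ → ℝ) (u : ℝ → ℝ → ℝ),
        (∀ x > 0, 0 ≤ tau x) →
        (∀ x > 0, 0 < phi x) →
        (∀ x > 0, HasDerivAt phi (phi' x) x) →
        (∀ x > 0, |tau x * phi' x| ≤ K1 * phi x) →
        (∀ x > 0, tau x ≤ K2 * phi x) →
        (∀ t ≥ 0, ∀ x > 0, 0 ≤ u x t) →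
        (∀ t ≥ 0, IntegrableOn (fun x => u x t * phi x) (Ioi 0)) →
        (∀ t ≥ 0, IntegrableOn (fun x => tau x * u x t) (Ioi 0)) →
        (∀ t ≥ 0, IntegrableOn (fun x => |phi' x| * tau x * u x t) (Ioi 0)) →
        -- the monomer equation
        (∀ t ≥ 0, HasDerivAt V
            (lam - gam * V t - V t * ∫ x in Ioi (0:ℝ), tau x * u x t) t) →
        -- the weak form of the polymer equation tested against φ
        (∀ t ≥ 0, HasDerivAt (fun s => ∫ x in Ioi (0:ℝ), u x s * phi x)
            (-Lam * (∫ x in Ioi (0:ℝ), u x t * phi x)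
              + (V t - lam / gam) * ∫ x in Ioi (0:ℝ), tau x * phi' x * u x t) t) →
        (∫ x in Ioi (0:ℝ), u x 0 * phi x) + |V 0 - lam / gam| ≤ eps →
        ∀ t ≥ 0,
          (∫ x in Ioi (0:ℝ), u x t * phi x) + |V t - lam / gam|
            ≤ C * Real.exp (-r * t) := by
  -- Constants
  obtain ⟨Vb, hVbdef⟩ : ∃ v : ℝ, v = lam / gam := ⟨_, rfl⟩
  have hVb : 0 < Vb := hVbdef ▸ div_pos hlam hgam
  obtain ⟨D, hDdef⟩ : ∃ d : ℝ, d = K1 + 2 * K2 * (1 + Vb) := ⟨_, rfl⟩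
  have hD : 0 < D := by
    rw [hDdef]
    have : 0 < 2 * K2 * (1 + Vb) := by nlinarith
    linarith
  obtain ⟨dl, hdldef⟩ : ∃ d : ℝ, d = min 1 (Lam / (2 * D)) := ⟨_, rfl⟩
  have hdl0 : 0 < dl := hdldef ▸ lt_min one_pos (by positivity)
  have hdl1 : dl ≤ 1 := hdldef ▸ min_le_left _ _
  have hdlD : dl * D ≤ Lam / 2 := by
    have h1 : dl ≤ Lam / (2 * D) := hdldef ▸ min_le_right _ _
    have h2 : dl * D ≤ (Lam / (2 * D)) * D := by
      apply mul_le_mul_of_nonneg_right h1 hD.le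
    calc dl * D ≤ (Lam / (2 * D)) * D := h2
      _ = Lam / 2 := by field_simp
  obtain ⟨r, hrdef⟩ : ∃ q : ℝ, q = min (Lam / 2) (2 * gam) := ⟨_, rfl⟩
  have hr0 : 0 < r := hrdef ▸ lt_min (by linarith) (by linarith)
  have hr1 : r ≤ Lam / 2 := hrdef ▸ min_le_left _ _
  have hr2 : r ≤ 2 * gam := hrdef ▸ min_le_right _ _
  have hcoef : dl * K1 + 2 * (dl * ((dl + Vb) * K2)) ≤ Lam / 2 := by
    have h1 : 0 ≤ dl * K2 * (1 - dl) :=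
      mul_nonneg (mul_nonneg hdl0.le hK2.le) (by linarith)
    rw [hDdef] at hdlD
    nlinarith [hdlD]
  refine ⟨dl ^ 2 / 4, by positivity, 2, by norm_num, r / 2, by positivity, ?_⟩
  intro tau phi phi' V u htau hphi hphid hb1 hb2 hu hint1 hint2 hint3 hVeq hweak hinit
  rw [← hVbdef] at hinit hweak ⊢
  -- basic integral estimates
  have hMnn : ∀ s, 0 ≤ s → 0 ≤ ∫ x in Ioi (0:ℝ), u x s * phi x := by
    intro s hs
    exact setIntegral_nonneg measurableSet_Ioi fun x hx =>
      mul_nonneg (hu s hs x hx) (hphi x hx).le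
  have hI2nn : ∀ s, 0 ≤ s → 0 ≤ ∫ x in Ioi (0:ℝ), tau x * u x s := by
    intro s hs
    exact setIntegral_nonneg measurableSet_Ioi fun x hx =>
      mul_nonneg (htau x hx) (hu s hs x hx)
  have hI2b : ∀ s, 0 ≤ s →
      (∫ x in Ioi (0:ℝ), tau x * u x s) ≤ K2 * ∫ x in Ioi (0:ℝ), u x s * phi x := by
    intro s hs
    have h1 : (∫ x in Ioi (0:ℝ), tau x * u x s)
        ≤ ∫ x in Ioi (0:ℝ), K2 * (u x s * phi x) := by
      apply setIntegral_mono_on (hint2 s hs) ((hint1 s hs).const_mul K2) measurableSet_Ioi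
      intro x hx
      calc tau x * u x s ≤ (K2 * phi x) * u x s :=
            mul_le_mul_of_nonneg_right (hb2 x hx) (hu s hs x hx)
        _ = K2 * (u x s * phi x) := by ring
    rwa [integral_const_mul] at h1
  have habsint : ∀ s, 0 ≤ s →
      IntegrableOn (fun x => |tau x * phi' x * u x s|) (Ioi 0) := by
    intro s hs
    apply (hint3 s hs).congr_fun _ measurableSet_Ioi
    intro x hx
    dsimp only
    rw [abs_mul, abs_mul, abs_of_nonneg (htau x hx), abs_of_nonneg (hu s hs x hx)]
    ring
  have hI1b : ∀ s, 0 ≤ s →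
      |∫ x in Ioi (0:ℝ), tau x * phi' x * u x s|
        ≤ K1 * ∫ x in Ioi (0:ℝ), u x s * phi x := by
    intro s hs
    have h0 : |∫ x in Ioi (0:ℝ), tau x * phi' x * u x s|
        ≤ ∫ x in Ioi (0:ℝ), |tau x * phi' x * u x s| := by
      simpa only [Real.norm_eq_abs] using
        norm_integral_le_integral_norm (μ := volume.restrict (Ioi 0))
          (fun x => tau x * phi' x * u x s)
    have h1 : (∫ x in Ioi (0:ℝ), |tau x * phi' x * u x s|)
        ≤ ∫ x in Ioi (0:ℝ), K1 * (u x s * phi x) := by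
      apply setIntegral_mono_on (habsint s hs) ((hint1 s hs).const_mul K1) measurableSet_Ioi
      intro x hx
      calc |tau x * phi' x * u x s| = |tau x * phi' x| * u x s := by
            rw [abs_mul, abs_of_nonneg (hu s hs x hx)]
        _ ≤ (K1 * phi x) * u x s :=
            mul_le_mul_of_nonneg_right (hb1 x hx) (hu s hs x hx)
        _ = K1 * (u x s * phi x) := by ring
    rw [integral_const_mul] at h1
    exact h0.trans h1
  -- the energy and its derivative
  have hEd : ∀ s ≥ (0:ℝ), HasDerivAt
      (fun q => (∫ x in Ioi (0:ℝ), u x q * phi x) + (V q - Vb) ^ 2)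
      ((-Lam * (∫ x in Ioi (0:ℝ), u x s * phi x)
          + (V s - Vb) * ∫ x in Ioi (0:ℝ), tau x * phi' x * u x s)
        + 2 * (V s - Vb)
          * (lam - gam * V s - V s * ∫ x in Ioi (0:ℝ), tau x * u x s)) s := by
    intro s hs
    have h1 := hweak s hs
    have h2 := ((hVeq s hs).sub_const Vb).pow 2
    have h3 := h1.add h2
    convert h3 using 1 <;> first | rfl | (push_cast; ring)
  have hEnn : ∀ s ≥ (0:ℝ),
      0 ≤ (∫ x in Ioi (0:ℝ), u x s * phi x) + (V s - Vb) ^ 2 := by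
    intro s hs
    exact add_nonneg (hMnn s hs) (sq_nonneg _)
  -- the conditional differential inequality
  have hbound : ∀ s ≥ (0:ℝ),
      (∫ x in Ioi (0:ℝ), u x s * phi x) + (V s - Vb) ^ 2 ≤ dl ^ 2 →
      ((-Lam * (∫ x in Ioi (0:ℝ), u x s * phi x)
          + (V s - Vb) * ∫ x in Ioi (0:ℝ), tau x * phi' x * u x s)
        + 2 * (V s - Vb)
          * (lam - gam * V s - V s * ∫ x in Ioi (0:ℝ), tau x * u x s))
        ≤ -r * ((∫ x in Ioi (0:ℝ), u x s * phi x) + (V s - Vb) ^ 2) := by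
    intro s hs hE
    obtain ⟨m, hmdef⟩ : ∃ m : ℝ, m = ∫ x in Ioi (0:ℝ), u x s * phi x := ⟨_, rfl⟩
    obtain ⟨i1, hi1def⟩ : ∃ v : ℝ, v = ∫ x in Ioi (0:ℝ), tau x * phi' x * u x s := ⟨_, rfl⟩
    obtain ⟨i2, hi2def⟩ : ∃ v : ℝ, v = ∫ x in Ioi (0:ℝ), tau x * u x s := ⟨_, rfl⟩
    obtain ⟨w, hwdef⟩ : ∃ w : ℝ, w = V s - Vb := ⟨_, rfl⟩
    rw [← hmdef, ← hwdef] at hE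
    rw [← hmdef, ← hi1def, ← hi2def, ← hwdef]
    have hm : 0 ≤ m := hmdef ▸ hMnn s hs
    have hi1 : |i1| ≤ K1 * m := by rw [hmdef, hi1def]; exact hI1b s hs
    have hi2a : 0 ≤ i2 := hi2def ▸ hI2nn s hs
    have hi2b : i2 ≤ K2 * m := by rw [hmdef, hi2def]; exact hI2b s hs
    have hw2 : w ^ 2 ≤ dl ^ 2 := by linarith
    have hw : |w| ≤ dl := by
      rw [abs_le]
      constructor <;> nlinarith
    have hVs : V s = w + Vb := by rw [hwdef]; ring
    have hlg : gam * Vb = lam := by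
      rw [hVbdef]; field_simp
    -- term bounds
    have t1 : w * i1 ≤ dl * (K1 * m) := by
      calc w * i1 ≤ |w * i1| := le_abs_self _
        _ = |w| * |i1| := abs_mul _ _
        _ ≤ dl * (K1 * m) := mul_le_mul hw hi1 (abs_nonneg _) hdl0.le
    have hwb : |w + Vb| ≤ dl + Vb := by
      calc |w + Vb| ≤ |w| + |Vb| := abs_add_le _ _
        _ = |w| + Vb := by rw [abs_of_pos hVb]
        _ ≤ dl + Vb := by linarith
    have t2 : -(w * ((w + Vb) * i2)) ≤ dl * ((dl + Vb) * (K2 * m)) := by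
      calc -(w * ((w + Vb) * i2)) ≤ |w * ((w + Vb) * i2)| := neg_le_abs _
        _ = |w| * (|w + Vb| * |i2|) := by rw [abs_mul, abs_mul]
        _ ≤ dl * ((dl + Vb) * (K2 * m)) := by
            apply mul_le_mul hw _ (by positivity) hdl0.le
            rw [abs_of_nonneg hi2a]
            apply mul_le_mul hwb hi2b hi2a (by linarith)
    rw [hVs, ← hlg]
    have key2 : -Lam * m + w * i1 - 2 * gam * w ^ 2 - 2 * (w * ((w + Vb) * i2))
        ≤ -r * (m + w ^ 2) := by
      nlinarith [t1, t2, mul_nonneg (sub_nonneg.2 hcoef) hm,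
        mul_nonneg (sub_nonneg.2 hr1) hm, mul_nonneg (sub_nonneg.2 hr2) (sq_nonneg w)]
    linarith [key2]
  -- initial smallness
  have hM0 : 0 ≤ ∫ x in Ioi (0:ℝ), u x 0 * phi x := hMnn 0 le_rfl
  have habs0 : 0 ≤ |V 0 - Vb| := abs_nonneg _
  have hW0 : (V 0 - Vb) ^ 2 ≤ (dl ^ 2 / 4) ^ 2 := by
    have h1 : |V 0 - Vb| ≤ dl ^ 2 / 4 := by linarith
    nlinarith [sq_abs (V 0 - Vb)]
  have hdlsq : dl ^ 2 ≤ 1 := by nlinarith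
  have h4 : (dl ^ 2 / 4) ^ 2 ≤ dl ^ 2 / 16 := by nlinarith [pow_pos hdl0 2]
  have hinit' : (∫ x in Ioi (0:ℝ), u x 0 * phi x) + (V 0 - Vb) ^ 2 < dl ^ 2 / 2 := by
    have := pow_pos hdl0 2
    linarith
  -- apply the ODE lemma
  have hkey := ode_decay r dl
    (fun q => (∫ x in Ioi (0:ℝ), u x q * phi x) + (V q - Vb) ^ 2)
    (fun s => (-Lam * (∫ x in Ioi (0:ℝ), u x s * phi x)
          + (V s - Vb) * ∫ x in Ioi (0:ℝ), tau x * phi' x * u x s)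
        + 2 * (V s - Vb)
          * (lam - gam * V s - V s * ∫ x in Ioi (0:ℝ), tau x * u x s))
    hr0 hdl0 hEd hEnn hbound hinit'
  -- conclusion
  intro t ht
  have hk := hkey t ht
  try simp only at hk
  have hE0 : (∫ x in Ioi (0:ℝ), u x 0 * phi x) + (V 0 - Vb) ^ 2 ≤ 1 / 2 := by
    nlinarith
  have hE0nn : 0 ≤ (∫ x in Ioi (0:ℝ), u x 0 * phi x) + (V 0 - Vb) ^ 2 :=
    hEnn 0 le_rfl
  have hexp_nn : (0:ℝ) ≤ Real.exp (-r * t) := (Real.exp_pos _).le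
  have hEt : (∫ x in Ioi (0:ℝ), u x t * phi x) + (V t - Vb) ^ 2
      ≤ (1 / 2) * Real.exp (-r * t) := by
    calc (∫ x in Ioi (0:ℝ), u x t * phi x) + (V t - Vb) ^ 2
        ≤ ((∫ x in Ioi (0:ℝ), u x 0 * phi x) + (V 0 - Vb) ^ 2) * Real.exp (-r * t) := hk
      _ ≤ (1 / 2) * Real.exp (-r * t) := mul_le_mul_of_nonneg_right hE0 hexp_nn
  have hsq : Real.exp (-(r / 2) * t) ^ 2 = Real.exp (-r * t) := by
    rw [sq, ← Real.exp_add]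
    ring_nf
  have hee : Real.exp (-r * t) ≤ Real.exp (-(r / 2) * t) := by
    apply Real.exp_le_exp.2
    nlinarith
  have hMt : (∫ x in Ioi (0:ℝ), u x t * phi x) ≤ Real.exp (-(r / 2) * t) := by
    have := sq_nonneg (V t - Vb)
    nlinarith [Real.exp_pos (-r * t)]
  have hWt : |V t - Vb| ≤ Real.exp (-(r / 2) * t) := by
    have h1 : (V t - Vb) ^ 2 ≤ Real.exp (-(r / 2) * t) ^ 2 := by
      rw [hsq]
      nlinarith [hMnn t ht, Real.exp_pos (-r * t)]
    nlinarith [sq_abs (V t - Vb), abs_nonneg (V t - Vb), Real.exp_pos (-(r / 2) * t)]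
  calc (∫ x in Ioi (0:ℝ), u x t * phi x) + |V t - Vb|
      ≤ Real.exp (-(r / 2) * t) + Real.exp (-(r / 2) * t) := add_le_add hMt hWt
    _ = 2 * Real.exp (-(r / 2) * t) := by ring
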